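/- arXiv:1008.2504 — 2 statements merged into one kernel-verified Lean document; each statement's English description precedes it below -/
import Mathlib

section
/- For each n ≥ 0, the vector space C_n := B^{⊗(n+1)} ⊗ A is an A-bimodule under the left action a · (b₀⊗⋯⊗b_n⊗a₀) := (id_B^{⊗(n+1)} ⊗ m_A)(Γ_n(a ⊗ b₀⊗⋯⊗b_n) ⊗ a₀) and the right action (b₀⊗⋯⊗b_n⊗a₀) · a := b₀⊗⋯⊗b_n⊗(a₀a); that is, 1_A · x = x = x · 1_A, a · (a' · x) = (aa') · x, (x · a) · a' = x · (aa'), and (a · x) · a' = a · (x · a') for all a, a' ∈ A and x ∈ C_n. -/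
open TensorProduct

/-- A linear map `R : B ⊗ A → A ⊗ B` is *quasitriangular* if
`R∘(m_B ⊗ id_A) = (id_A ⊗ m_B)∘(R ⊗ id_B)∘(id_B ⊗ R)` and
`R∘(id_B ⊗ m_A) = (m_A ⊗ id_B)∘(id_A ⊗ R)∘(R ⊗ id_A)`,
with the evident associators inserted. -/
def Quasitriangular (k A B : Type) [Field k] [Ring A] [Algebra k A] [Ring B] [Algebra k B]
    (R : B ⊗[k] A →ₗ[k] A ⊗[k] B) : Prop :=
  (R ∘ₗ LinearMap.rTensor A (LinearMap.mul' k B)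
      = LinearMap.lTensor A (LinearMap.mul' k B)
        ∘ₗ (TensorProduct.assoc k A B B).toLinearMap
        ∘ₗ LinearMap.rTensor B R
        ∘ₗ (TensorProduct.assoc k B A B).symm.toLinearMap
        ∘ₗ LinearMap.lTensor B R
        ∘ₗ (TensorProduct.assoc k B B A).toLinearMap)
  ∧ (R ∘ₗ LinearMap.lTensor B (LinearMap.mul' k A)
      = LinearMap.rTensor B (LinearMap.mul' k A)
        ∘ₗ (TensorProduct.assoc k A A B).symm.toLinearMap
        ∘ₗ LinearMap.lTensor A R
        ∘ₗ (TensorProduct.assoc k A B A).toLinearMap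
        ∘ₗ LinearMap.rTensor A R
        ∘ₗ (TensorProduct.assoc k B A A).symm.toLinearMap)

/-- A linear map `R : B ⊗ A → A ⊗ B` is *normal* if `R(1_B ⊗ a) = a ⊗ 1_B` and
`R(b ⊗ 1_A) = 1_A ⊗ b`. -/
def RNormal (k A B : Type) [Field k] [Ring A] [Algebra k A] [Ring B] [Algebra k B]
    (R : B ⊗[k] A →ₗ[k] A ⊗[k] B) : Prop :=
  (∀ a : A, R ((1 : B) ⊗ₜ[k] a) = a ⊗ₜ[k] (1 : B))
  ∧ (∀ b : B, R (b ⊗ₜ[k] (1 : A)) = (1 : A) ⊗ₜ[k] b)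

variable (k : Type) [Field k]

/-- `Tpow k M n` is the `(n+1)`-fold tensor power `M ⊗ M ⊗ ⋯ ⊗ M`. -/
noncomputable def Tpow (M : ModuleCat.{0} k) : ℕ → ModuleCat.{0} k
  | 0 => M
  | (n+1) => ModuleCat.of k (↥M ⊗[k] ↥(Tpow M n))

/-- moving the last tensor factor out: `M^{⊗(n+2)} ≃ M^{⊗(n+1)} ⊗ M`. -/
noncomputable def ePow (M : ModuleCat.{0} k) : ∀ n : ℕ,
    (↥(Tpow k M (n+1)) ≃ₗ[k] ↥(Tpow k M n) ⊗[k] ↥M)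
  | 0 => LinearEquiv.refl k (↥M ⊗[k] ↥M)
  | (n+1) => (TensorProduct.congr (LinearEquiv.refl k ↥M) (ePow M n)).trans
      (TensorProduct.assoc k ↥M ↥(Tpow k M n) ↥M).symm

variable (A B : Type) [Ring A] [Algebra k A] [Ring B] [Algebra k B]

/-- The `(q+1)`-fold tensor power of `A`. -/
noncomputable abbrev TA (q : ℕ) : Type := ↥(Tpow k (ModuleCat.of k A) q)
/-- The `(p+1)`-fold tensor power of `B`. -/
noncomputable abbrev TB (p : ℕ) : Type := ↥(Tpow k (ModuleCat.of k B) p)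

variable {k A B}

/-- `Θ_q = R_{q+1,q+2} ∘ ⋯ ∘ R_{2,3} ∘ R_{1,2} : B ⊗ A^{⊗(q+1)} → A^{⊗(q+1)} ⊗ B`. -/
noncomputable def Theta (R : B ⊗[k] A →ₗ[k] A ⊗[k] B) :
    ∀ q : ℕ, (B ⊗[k] TA k A q) →ₗ[k] (TA k A q ⊗[k] B)
  | 0 => R
  | (q+1) =>
      (TensorProduct.assoc k A (TA k A q) B).symm.toLinearMap
      ∘ₗ LinearMap.lTensor A (Theta R q)
      ∘ₗ (TensorProduct.assoc k A B (TA k A q)).toLinearMap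
      ∘ₗ LinearMap.rTensor (TA k A q) R
      ∘ₗ (TensorProduct.assoc k B A (TA k A q)).symm.toLinearMap

/-- `Γ_p = R⁻¹_{p+1,p+2} ∘ ⋯ ∘ R⁻¹_{2,3} ∘ R⁻¹_{1,2} : A ⊗ B^{⊗(p+1)} → B^{⊗(p+1)} ⊗ A`. -/
noncomputable def Gamma (Ri : A ⊗[k] B →ₗ[k] B ⊗[k] A) :
    ∀ p : ℕ, (A ⊗[k] TB k B p) →ₗ[k] (TB k B p ⊗[k] A)
  | 0 => Ri
  | (p+1) =>
      (TensorProduct.assoc k B (TB k B p) A).symm.toLinearMap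
      ∘ₗ LinearMap.lTensor B (Gamma Ri p)
      ∘ₗ (TensorProduct.assoc k B A (TB k B p)).toLinearMap
      ∘ₗ LinearMap.rTensor (TB k B p) Ri
      ∘ₗ (TensorProduct.assoc k A B (TB k B p)).symm.toLinearMap

/-- The paracyclic operator `t_{p,q} = σ ∘ (id_B^{⊗p} ⊗ Θ_q)` on `B^{⊗(p+1)} ⊗ A^{⊗(q+1)}`,
where `σ` cyclically moves the last tensor factor (which lies in `B`) to the front. -/
noncomputable def tOp (R : B ⊗[k] A →ₗ[k] A ⊗[k] B) :
    ∀ (p q : ℕ), (TB k B p ⊗[k] TA k A q) →ₗ[k] (TB k B p ⊗[k] TA k A q)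
  | 0, q => (TensorProduct.comm k (TA k A q) B).toLinearMap ∘ₗ Theta R q
  | (p+1), q =>
      (TensorProduct.assoc k B (TB k B p) (TA k A q)).symm.toLinearMap
      ∘ₗ (TensorProduct.comm k (TB k B p ⊗[k] TA k A q) B).toLinearMap
      ∘ₗ (TensorProduct.assoc k (TB k B p) (TA k A q) B).symm.toLinearMap
      ∘ₗ LinearMap.lTensor (TB k B p) (Theta R q)
      ∘ₗ (TensorProduct.assoc k (TB k B p) B (TA k A q)).toLinearMap
      ∘ₗ LinearMap.rTensor (TA k A q) (ePow k (ModuleCat.of k B) p).toLinearMap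

/-- The paracyclic operator `t̄_{p,q}` on `B^{⊗(p+1)} ⊗ A^{⊗(q+1)}`, given by
`t̄(b₀⊗⋯⊗b_p⊗a₀⊗⋯⊗a_q) = Γ_p(a_q ⊗ b₀⊗⋯⊗b_p) ⊗ a₀⊗⋯⊗a_{q−1}`. -/
noncomputable def tbarOp (Ri : A ⊗[k] B →ₗ[k] B ⊗[k] A) :
    ∀ (p q : ℕ), (TB k B p ⊗[k] TA k A q) →ₗ[k] (TB k B p ⊗[k] TA k A q)
  | p, 0 => Gamma Ri p ∘ₗ (TensorProduct.comm k (TB k B p) A).toLinearMap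
  | p, (q+1) =>
      (TensorProduct.assoc k (TB k B p) A (TA k A q)).toLinearMap
      ∘ₗ LinearMap.rTensor (TA k A q) (Gamma Ri p)
      ∘ₗ (TensorProduct.assoc k A (TB k B p) (TA k A q)).symm.toLinearMap
      ∘ₗ (TensorProduct.comm k (TB k B p ⊗[k] TA k A q) A).toLinearMap
      ∘ₗ (TensorProduct.assoc k (TB k B p) (TA k A q) A).symm.toLinearMap
      ∘ₗ LinearMap.lTensor (TB k B p) (ePow k (ModuleCat.of k A) q).toLinearMap

/-- The left `A`-action `a · (b₀⊗⋯⊗b_n⊗a₀) = (id^{⊗(n+1)} ⊗ m_A)(Γ_n(a ⊗ b₀⊗⋯⊗b_n) ⊗ a₀)`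
on `C_n = B^{⊗(n+1)} ⊗ A`, as a linear map `A ⊗ C_n → C_n`. -/
noncomputable def leftAct {k A B : Type} [Field k] [Ring A] [Algebra k A] [Ring B] [Algebra k B]
    (Ri : A ⊗[k] B →ₗ[k] B ⊗[k] A) (n : ℕ) :
    (A ⊗[k] (TB k B n ⊗[k] A)) →ₗ[k] (TB k B n ⊗[k] A) :=
  LinearMap.lTensor (TB k B n) (LinearMap.mul' k A)
  ∘ₗ (TensorProduct.assoc k (TB k B n) A A).toLinearMap
  ∘ₗ LinearMap.rTensor A (Gamma Ri n)
  ∘ₗ (TensorProduct.assoc k A (TB k B n) A).symm.toLinearMap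

/-- The right `A`-action `(b₀⊗⋯⊗b_n⊗a₀) · a = b₀⊗⋯⊗b_n⊗(a₀a)` on `C_n = B^{⊗(n+1)} ⊗ A`,
as a linear map `C_n ⊗ A → C_n`. -/
noncomputable def rightAct {k A B : Type} [Field k] [Ring A] [Algebra k A] [Ring B] [Algebra k B]
    (n : ℕ) : ((TB k B n ⊗[k] A) ⊗[k] A) →ₗ[k] (TB k B n ⊗[k] A) :=
  LinearMap.lTensor (TB k B n) (LinearMap.mul' k A)
  ∘ₗ (TensorProduct.assoc k (TB k B n) A A).toLinearMap

set_option maxHeartbeats 2000000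
set_option synthInstance.maxHeartbeats 1000000
section Aux

lemma lT_cancel {M : Type} [AddCommGroup M] [Module k M]
    (R : B ⊗[k] A ≃ₗ[k] A ⊗[k] B) (v : M ⊗[k] (A ⊗[k] B)) :
    LinearMap.lTensor M R.toLinearMap (LinearMap.lTensor M R.symm.toLinearMap v) = v := by
  rw [← LinearMap.comp_apply, ← LinearMap.lTensor_comp]; simp

lemma rT_cancel {M : Type} [AddCommGroup M] [Module k M]
    (R : B ⊗[k] A ≃ₗ[k] A ⊗[k] B) (v : (A ⊗[k] B) ⊗[k] M) :
    LinearMap.rTensor M R.toLinearMap (LinearMap.rTensor M R.symm.toLinearMap v) = v := by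
  rw [← LinearMap.comp_apply, ← LinearMap.rTensor_comp]; simp

/-- The base case of multiplicativity of `Γ`, derived from the second
quasitriangularity axiom for `R` by inverting. -/
lemma base_mul (R : B ⊗[k] A ≃ₗ[k] A ⊗[k] B)
    (hqt : Quasitriangular k A B R.toLinearMap) (a a' : A) (b : B) :
    R.symm.toLinearMap ((a * a') ⊗ₜ[k] b)
      = LinearMap.lTensor B (LinearMap.mul' k A)
          ((TensorProduct.assoc k B A A)
            ((LinearMap.rTensor A R.symm.toLinearMap)
              ((TensorProduct.assoc k A B A).symm
                ((LinearMap.lTensor A R.symm.toLinearMap) (a ⊗ₜ[k] (a' ⊗ₜ[k] b)))))) := by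
  have h := LinearMap.congr_fun hqt.2
    ((TensorProduct.assoc k B A A)
      ((LinearMap.rTensor A R.symm.toLinearMap)
        ((TensorProduct.assoc k A B A).symm
          ((LinearMap.lTensor A R.symm.toLinearMap) (a ⊗ₜ[k] (a' ⊗ₜ[k] b))))))
  simp only [LinearMap.coe_comp, Function.comp_apply, LinearEquiv.coe_coe,
    LinearEquiv.symm_apply_apply, rT_cancel, LinearEquiv.apply_symm_apply, lT_cancel,
    TensorProduct.assoc_symm_tmul, LinearMap.rTensor_tmul, LinearMap.mul'_apply] at h
  rw [← h]
  simp

end Aux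
lemma gamma_one (R : B ⊗[k] A ≃ₗ[k] A ⊗[k] B) (hn : RNormal k A B R.toLinearMap) :
    ∀ (p : ℕ) (z : TB k B p),
      Gamma R.symm.toLinearMap p ((1 : A) ⊗ₜ[k] z) = z ⊗ₜ[k] (1 : A)
  | 0 => fun z => by
      have h := hn.2 z
      show R.symm.toLinearMap ((1 : A) ⊗ₜ[k] z) = z ⊗ₜ[k] (1 : A)
      rw [← h]; simp; rfl
  | (p+1) => by
      have key : ∀ z : B ⊗[k] TB k B p,
          ((TensorProduct.assoc k B (TB k B p) A).symm.toLinearMap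
            ∘ₗ LinearMap.lTensor B (Gamma R.symm.toLinearMap p)
            ∘ₗ (TensorProduct.assoc k B A (TB k B p)).toLinearMap
            ∘ₗ LinearMap.rTensor (TB k B p) R.symm.toLinearMap
            ∘ₗ (TensorProduct.assoc k A B (TB k B p)).symm.toLinearMap)
            ((1 : A) ⊗ₜ[k] z)
          = z ⊗ₜ[k] (1 : A) := by
        intro z
        induction z using TensorProduct.induction_on with
        | zero => simp
        | add z₁ z₂ h1 h2 => simp only [TensorProduct.tmul_add, map_add, h1, h2,
            TensorProduct.add_tmul]
        | tmul b y =>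
          have hb : R.symm.toLinearMap ((1 : A) ⊗ₜ[k] b) = b ⊗ₜ[k] (1 : A) := by
            rw [← hn.2 b]; simp
          simp only [LinearMap.coe_comp, Function.comp_apply, LinearEquiv.coe_coe,
            TensorProduct.assoc_symm_tmul, LinearMap.rTensor_tmul, hb,
            TensorProduct.assoc_tmul, LinearMap.lTensor_tmul, gamma_one R hn p y]
      exact fun z => key z
/-- Auxiliary comparison map used in the inductive proof of multiplicativity of `Γ`. -/
noncomputable def Phi (Ri : A ⊗[k] B →ₗ[k] B ⊗[k] A) (p : ℕ) :
    ((B ⊗[k] A) ⊗[k] (TB k B p ⊗[k] A)) →ₗ[k] ((B ⊗[k] TB k B p) ⊗[k] A) :=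
  (TensorProduct.assoc k B (TB k B p) A).symm.toLinearMap
  ∘ₗ LinearMap.lTensor B (LinearMap.lTensor (TB k B p) (LinearMap.mul' k A))
  ∘ₗ LinearMap.lTensor B (TensorProduct.assoc k (TB k B p) A A).toLinearMap
  ∘ₗ LinearMap.lTensor B (LinearMap.rTensor A (Gamma Ri p))
  ∘ₗ LinearMap.lTensor B (TensorProduct.assoc k A (TB k B p) A).symm.toLinearMap
  ∘ₗ (TensorProduct.assoc k B A (TB k B p ⊗[k] A)).toLinearMap

lemma Phi_tmul (Ri : A ⊗[k] B →ₗ[k] B ⊗[k] A) (p : ℕ) (e : B) (f : A)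
    (t : TB k B p ⊗[k] A) :
    Phi Ri p ((e ⊗ₜ[k] f) ⊗ₜ[k] t)
      = (TensorProduct.assoc k B (TB k B p) A).symm
          (e ⊗ₜ[k] (LinearMap.lTensor (TB k B p) (LinearMap.mul' k A)
            ((TensorProduct.assoc k (TB k B p) A A)
              ((LinearMap.rTensor A (Gamma Ri p))
                ((TensorProduct.assoc k A (TB k B p) A).symm (f ⊗ₜ[k] t)))))) := by
  simp [Phi]

lemma lhs_mul (R : B ⊗[k] A ≃ₗ[k] A ⊗[k] B) (p : ℕ)
    (IH : ∀ (a a' : A) (z : TB k B p),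
      Gamma R.symm.toLinearMap p ((a * a') ⊗ₜ[k] z)
        = LinearMap.lTensor (TB k B p) (LinearMap.mul' k A)
            ((TensorProduct.assoc k (TB k B p) A A)
              ((LinearMap.rTensor A (Gamma R.symm.toLinearMap p))
                ((TensorProduct.assoc k A (TB k B p) A).symm
                  ((LinearMap.lTensor A (Gamma R.symm.toLinearMap p))
                    (a ⊗ₜ[k] (a' ⊗ₜ[k] z)))))))
    (d : A) (y : TB k B p) (u : B ⊗[k] A) :
    (TensorProduct.assoc k B (TB k B p) A).symm
      ((LinearMap.lTensor B (Gamma R.symm.toLinearMap p))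
        ((TensorProduct.assoc k B A (TB k B p))
          ((LinearMap.lTensor B (LinearMap.mul' k A)
              ((TensorProduct.assoc k B A A) (u ⊗ₜ[k] d))) ⊗ₜ[k] y)))
    = Phi R.symm.toLinearMap p (u ⊗ₜ[k] Gamma R.symm.toLinearMap p (d ⊗ₜ[k] y)) := by
  induction u using TensorProduct.induction_on with
  | zero => simp
  | add u₁ u₂ h1 h2 =>
      simp only [TensorProduct.add_tmul, TensorProduct.tmul_add, map_add, h1, h2]
  | tmul e f =>
      simp only [TensorProduct.assoc_tmul, LinearMap.lTensor_tmul, LinearMap.mul'_apply,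
        Phi_tmul]
      rw [IH f d y]
      simp only [LinearMap.lTensor_tmul]

lemma rhs_mul (R : B ⊗[k] A ≃ₗ[k] A ⊗[k] B) (p : ℕ) (a : A) (c : B)
    (t : TB k B p ⊗[k] A) :
    LinearMap.lTensor (B ⊗[k] TB k B p) (LinearMap.mul' k A)
      ((TensorProduct.assoc k (B ⊗[k] TB k B p) A A)
        ((LinearMap.rTensor A
            ((TensorProduct.assoc k B (TB k B p) A).symm.toLinearMap
              ∘ₗ LinearMap.lTensor B (Gamma R.symm.toLinearMap p)
              ∘ₗ (TensorProduct.assoc k B A (TB k B p)).toLinearMap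
              ∘ₗ LinearMap.rTensor (TB k B p) R.symm.toLinearMap
              ∘ₗ (TensorProduct.assoc k A B (TB k B p)).symm.toLinearMap))
          ((TensorProduct.assoc k A (B ⊗[k] TB k B p) A).symm
            (a ⊗ₜ[k] ((TensorProduct.assoc k B (TB k B p) A).symm (c ⊗ₜ[k] t))))))
    = Phi R.symm.toLinearMap p ((R.symm (a ⊗ₜ[k] c)) ⊗ₜ[k] t) := by
  induction t using TensorProduct.induction_on with
  | zero => simp
  | add t₁ t₂ h1 h2 =>
      simp only [TensorProduct.tmul_add, map_add, h1, h2]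
  | tmul g h =>
      simp only [TensorProduct.assoc_symm_tmul, LinearMap.rTensor_tmul,
        LinearMap.coe_comp, Function.comp_apply, LinearEquiv.coe_coe,
        TensorProduct.assoc_tmul, LinearMap.lTensor_tmul]
      generalize R.symm (a ⊗ₜ[k] c) = u
      induction u using TensorProduct.induction_on with
      | zero => simp
      | add u₁ u₂ h1 h2 =>
          simp only [TensorProduct.add_tmul, TensorProduct.tmul_add, map_add, h1, h2]
      | tmul e f =>
          simp only [TensorProduct.assoc_tmul, LinearMap.lTensor_tmul, Phi_tmul,
            TensorProduct.assoc_symm_tmul, LinearMap.rTensor_tmul]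
          generalize Gamma R.symm.toLinearMap p (f ⊗ₜ[k] g) = r
          induction r using TensorProduct.induction_on with
          | zero => simp
          | add r₁ r₂ h1 h2 =>
              simp only [TensorProduct.add_tmul, TensorProduct.tmul_add, map_add, h1, h2]
          | tmul i j =>
              simp only [TensorProduct.assoc_symm_tmul, TensorProduct.assoc_tmul,
                LinearMap.lTensor_tmul, LinearMap.mul'_apply]

lemma gamma_mul (R : B ⊗[k] A ≃ₗ[k] A ⊗[k] B)
    (hqt : Quasitriangular k A B R.toLinearMap) :
    ∀ (p : ℕ) (a a' : A) (z : TB k B p),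
      Gamma R.symm.toLinearMap p ((a * a') ⊗ₜ[k] z)
        = LinearMap.lTensor (TB k B p) (LinearMap.mul' k A)
            ((TensorProduct.assoc k (TB k B p) A A)
              ((LinearMap.rTensor A (Gamma R.symm.toLinearMap p))
                ((TensorProduct.assoc k A (TB k B p) A).symm
                  ((LinearMap.lTensor A (Gamma R.symm.toLinearMap p))
                    (a ⊗ₜ[k] (a' ⊗ₜ[k] z))))))
  | 0 => base_mul R hqt
  | (p+1) => by
      have IH := gamma_mul R hqt p
      have key : ∀ (a a' : A) (z : B ⊗[k] TB k B p),
          ((TensorProduct.assoc k B (TB k B p) A).symm.toLinearMap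
            ∘ₗ LinearMap.lTensor B (Gamma R.symm.toLinearMap p)
            ∘ₗ (TensorProduct.assoc k B A (TB k B p)).toLinearMap
            ∘ₗ LinearMap.rTensor (TB k B p) R.symm.toLinearMap
            ∘ₗ (TensorProduct.assoc k A B (TB k B p)).symm.toLinearMap)
            ((a * a') ⊗ₜ[k] z)
          = LinearMap.lTensor (B ⊗[k] TB k B p) (LinearMap.mul' k A)
              ((TensorProduct.assoc k (B ⊗[k] TB k B p) A A)
                ((LinearMap.rTensor A
                    ((TensorProduct.assoc k B (TB k B p) A).symm.toLinearMap
                      ∘ₗ LinearMap.lTensor B (Gamma R.symm.toLinearMap p)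
                      ∘ₗ (TensorProduct.assoc k B A (TB k B p)).toLinearMap
                      ∘ₗ LinearMap.rTensor (TB k B p) R.symm.toLinearMap
                      ∘ₗ (TensorProduct.assoc k A B (TB k B p)).symm.toLinearMap))
                  ((TensorProduct.assoc k A (B ⊗[k] TB k B p) A).symm
                    ((LinearMap.lTensor A
                        ((TensorProduct.assoc k B (TB k B p) A).symm.toLinearMap
                          ∘ₗ LinearMap.lTensor B (Gamma R.symm.toLinearMap p)
                          ∘ₗ (TensorProduct.assoc k B A (TB k B p)).toLinearMap
                          ∘ₗ LinearMap.rTensor (TB k B p) R.symm.toLinearMap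
                          ∘ₗ (TensorProduct.assoc k A B (TB k B p)).symm.toLinearMap))
                      (a ⊗ₜ[k] (a' ⊗ₜ[k] z)))))) := by
        intro a a' z
        induction z using TensorProduct.induction_on with
        | zero => simp
        | add z₁ z₂ h1 h2 =>
            simp only [TensorProduct.tmul_add, map_add, h1, h2]
        | tmul b y =>
            have h0 := base_mul R hqt a a' b
            simp only [LinearMap.coe_comp, Function.comp_apply, LinearEquiv.coe_coe,
              TensorProduct.assoc_symm_tmul, LinearMap.rTensor_tmul,
              LinearMap.lTensor_tmul] at h0 ⊢
            rw [h0]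
            generalize R.symm (a' ⊗ₜ[k] b) = w
            induction w using TensorProduct.induction_on with
            | zero => simp
            | add w₁ w₂ h1 h2 =>
                simp only [TensorProduct.add_tmul, TensorProduct.tmul_add, map_add, h1, h2]
            | tmul c d =>
                simp only [TensorProduct.assoc_symm_tmul, LinearMap.rTensor_tmul,
                  TensorProduct.assoc_tmul, LinearMap.lTensor_tmul, LinearEquiv.coe_coe]
                rw [lhs_mul R p IH d y (R.symm (a ⊗ₜ[k] c))]
                rw [rhs_mul R p a c (Gamma R.symm.toLinearMap p (d ⊗ₜ[k] y))]
      exact fun a a' z => key a a' z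
/-- `C_n = B^{⊗(n+1)} ⊗ A` is an `A`-bimodule for the left action
`a · (b₀⊗⋯⊗b_n⊗a₀) = (id^{⊗(n+1)} ⊗ m_A)(Γ_n(a ⊗ b₀⊗⋯⊗b_n) ⊗ a₀)` and the right action
`(b₀⊗⋯⊗b_n⊗a₀) · a = b₀⊗⋯⊗b_n⊗(a₀a)`. -/
theorem Cn_is_A_bimodule
    (k A B : Type) [Field k] [Ring A] [Algebra k A] [Ring B] [Algebra k B]
    (R : B ⊗[k] A ≃ₗ[k] A ⊗[k] B)
    (hqt : Quasitriangular k A B R.toLinearMap)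
    (hn : RNormal k A B R.toLinearMap)
    (n : ℕ) :
    (∀ x : TB k B n ⊗[k] A, leftAct R.symm.toLinearMap n ((1 : A) ⊗ₜ[k] x) = x)
    ∧ (∀ x : TB k B n ⊗[k] A, rightAct n (x ⊗ₜ[k] (1 : A)) = x)
    ∧ (∀ (a a' : A) (x : TB k B n ⊗[k] A),
        leftAct R.symm.toLinearMap n (a ⊗ₜ[k] leftAct R.symm.toLinearMap n (a' ⊗ₜ[k] x))
          = leftAct R.symm.toLinearMap n ((a * a') ⊗ₜ[k] x))
    ∧ (∀ (a a' : A) (x : TB k B n ⊗[k] A),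
        rightAct n (rightAct (k := k) (A := A) (B := B) n (x ⊗ₜ[k] a) ⊗ₜ[k] a')
          = rightAct n (x ⊗ₜ[k] (a * a')))
    ∧ (∀ (a a' : A) (x : TB k B n ⊗[k] A),
        rightAct n (leftAct R.symm.toLinearMap n (a ⊗ₜ[k] x) ⊗ₜ[k] a')
          = leftAct R.symm.toLinearMap n (a ⊗ₜ[k] rightAct n (x ⊗ₜ[k] a'))) := by
  refine ⟨?_, ?_, ?_, ?_, ?_⟩
  · -- left unit
    intro x
    induction x using TensorProduct.induction_on with
    | zero => simp
    | add x₁ x₂ h1 h2 => simp only [TensorProduct.tmul_add, map_add, h1, h2]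
    | tmul z a₀ =>
      simp only [leftAct, LinearMap.coe_comp, Function.comp_apply, LinearEquiv.coe_coe,
        TensorProduct.assoc_symm_tmul, LinearMap.rTensor_tmul, gamma_one R hn n z,
        TensorProduct.assoc_tmul, LinearMap.lTensor_tmul, LinearMap.mul'_apply, one_mul]
  · -- right unit
    intro x
    induction x using TensorProduct.induction_on with
    | zero => simp
    | add x₁ x₂ h1 h2 => simp only [TensorProduct.add_tmul, map_add, h1, h2]
    | tmul z a₀ =>
      simp only [rightAct, LinearMap.coe_comp, Function.comp_apply, LinearEquiv.coe_coe,
        TensorProduct.assoc_tmul, LinearMap.lTensor_tmul, LinearMap.mul'_apply, mul_one]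
  · -- left action is associative
    intro a a' x
    induction x using TensorProduct.induction_on with
    | zero => simp
    | add x₁ x₂ h1 h2 => simp only [TensorProduct.tmul_add, map_add, h1, h2]
    | tmul z a₀ =>
      simp only [leftAct, LinearMap.coe_comp, Function.comp_apply, LinearEquiv.coe_coe,
        TensorProduct.assoc_symm_tmul, LinearMap.rTensor_tmul, TensorProduct.assoc_tmul,
        LinearMap.lTensor_tmul]
      rw [gamma_mul R hqt n a a' z]
      simp only [LinearMap.lTensor_tmul]
      generalize Gamma R.symm.toLinearMap n (a' ⊗ₜ[k] z) = g
      induction g using TensorProduct.induction_on with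
      | zero => simp
      | add g₁ g₂ h1 h2 =>
          simp only [TensorProduct.add_tmul, TensorProduct.tmul_add, map_add, h1, h2]
      | tmul y₁ c =>
          simp only [TensorProduct.assoc_tmul, LinearMap.lTensor_tmul, LinearMap.mul'_apply,
            TensorProduct.assoc_symm_tmul, LinearMap.rTensor_tmul]
          generalize Gamma R.symm.toLinearMap n (a ⊗ₜ[k] y₁) = g2
          induction g2 using TensorProduct.induction_on with
          | zero => simp
          | add g₁ g₂ h1 h2 =>
              simp only [TensorProduct.add_tmul, TensorProduct.tmul_add, map_add, h1, h2]
          | tmul y₂ d =>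
              simp only [TensorProduct.assoc_tmul, LinearMap.lTensor_tmul,
                LinearMap.mul'_apply, mul_assoc]
  · -- right action is associative
    intro a a' x
    induction x using TensorProduct.induction_on with
    | zero => simp
    | add x₁ x₂ h1 h2 => simp only [TensorProduct.add_tmul, map_add, h1, h2]
    | tmul z a₀ =>
      simp only [rightAct, LinearMap.coe_comp, Function.comp_apply, LinearEquiv.coe_coe,
        TensorProduct.assoc_tmul, LinearMap.lTensor_tmul, LinearMap.mul'_apply, mul_assoc]
  · -- compatibility of the two actions
    intro a a' x
    induction x using TensorProduct.induction_on with
    | zero => simp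
    | add x₁ x₂ h1 h2 =>
        simp only [TensorProduct.tmul_add, TensorProduct.add_tmul, map_add, h1, h2]
    | tmul z a₀ =>
      simp only [leftAct, rightAct, LinearMap.coe_comp, Function.comp_apply,
        LinearEquiv.coe_coe, TensorProduct.assoc_symm_tmul, LinearMap.rTensor_tmul,
        TensorProduct.assoc_tmul, LinearMap.lTensor_tmul, LinearMap.mul'_apply]
      generalize Gamma R.symm.toLinearMap n (a ⊗ₜ[k] z) = g
      induction g using TensorProduct.induction_on with
      | zero => simp
      | add g₁ g₂ h1 h2 =>
          simp only [TensorProduct.add_tmul, TensorProduct.tmul_add, map_add, h1, h2]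
      | tmul y₁ c =>
          simp only [TensorProduct.assoc_tmul, LinearMap.lTensor_tmul,
            LinearMap.mul'_apply, mul_assoc]
end

section
/- Let (B, H) be a matched pair of Hopf algebras over a field k. Then the k-linear map R : H ⊗ B → B ⊗ H defined by R(h ⊗ b) = Σ (h₍₁₎ ▷ b₍₁₎) ⊗ (h₍₂₎ ◁ b₍₂₎) is quasitriangular and normal; that is, R∘(m_H ⊗ id_B) = (id_B ⊗ m_H)∘(R ⊗ id_H)∘(id_H ⊗ R) as maps H ⊗ H ⊗ B → B ⊗ H, R∘(id_H ⊗ m_B) = (m_B ⊗ id_H)∘(id_B ⊗ R)∘(R ⊗ id_B) as maps H ⊗ B ⊗ B → B ⊗ H, and R(1_H ⊗ b) = b ⊗ 1_H, R(h ⊗ 1_B) = 1_B ⊗ h for all h ∈ H, b ∈ B. -/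
open TensorProduct

section MatchedPair

variable (k B H : Type) [Field k] [Ring B] [HopfAlgebra k B] [Ring H] [HopfAlgebra k H]

/-- `(B, H)` is a *matched pair* of Hopf algebras: `B` is a left `H`-module coalgebra via
`actL` (`h ⊗ b ↦ h ▷ b`), `H` is a right `B`-module coalgebra via `actR` (`h ⊗ b ↦ h ◁ b`),
and the compatibility conditions of Majid hold. -/
structure MatchedPair (actL : H ⊗[k] B →ₗ[k] B) (actR : H ⊗[k] B →ₗ[k] H) : Prop where
  /-- `1_H ▷ b = b` -/
  one_actL : ∀ b : B, actL ((1 : H) ⊗ₜ[k] b) = b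
  /-- `(gh) ▷ b = g ▷ (h ▷ b)` -/
  mul_actL : ∀ (g h : H) (b : B), actL ((g * h) ⊗ₜ[k] b) = actL (g ⊗ₜ[k] actL (h ⊗ₜ[k] b))
  /-- `h ◁ 1_B = h` -/
  actR_unit : ∀ h : H, actR (h ⊗ₜ[k] (1 : B)) = h
  /-- `h ◁ (bc) = (h ◁ b) ◁ c` -/
  actR_mul' : ∀ (h : H) (b c : B), actR (h ⊗ₜ[k] (b * c)) = actR (actR (h ⊗ₜ[k] b) ⊗ₜ[k] c)
  /-- `Δ_B(h ▷ b) = Σ (h₍₁₎ ▷ b₍₁₎) ⊗ (h₍₂₎ ▷ b₍₂₎)` -/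
  comul_actL : Coalgebra.comul (R := k) ∘ₗ actL
    = TensorProduct.map actL actL
      ∘ₗ (TensorProduct.tensorTensorTensorComm k H H B B).toLinearMap
      ∘ₗ TensorProduct.map (Coalgebra.comul (R := k)) (Coalgebra.comul (R := k))
  /-- `ε_B(h ▷ b) = ε_H(h)ε_B(b)` -/
  counit_actL : Coalgebra.counit (R := k) ∘ₗ actL
    = (TensorProduct.lid k k).toLinearMap
      ∘ₗ TensorProduct.map (Coalgebra.counit (R := k)) (Coalgebra.counit (R := k))
  /-- `Δ_H(h ◁ b) = Σ (h₍₁₎ ◁ b₍₁₎) ⊗ (h₍₂₎ ◁ b₍₂₎)` -/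
  comul_actR : Coalgebra.comul (R := k) ∘ₗ actR
    = TensorProduct.map actR actR
      ∘ₗ (TensorProduct.tensorTensorTensorComm k H H B B).toLinearMap
      ∘ₗ TensorProduct.map (Coalgebra.comul (R := k)) (Coalgebra.comul (R := k))
  /-- `ε_H(h ◁ b) = ε_H(h)ε_B(b)` -/
  counit_actR : Coalgebra.counit (R := k) ∘ₗ actR
    = (TensorProduct.lid k k).toLinearMap
      ∘ₗ TensorProduct.map (Coalgebra.counit (R := k)) (Coalgebra.counit (R := k))
  /-- `h ▷ 1_B = ε_H(h)1_B` -/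
  actL_one : ∀ h : H, actL (h ⊗ₜ[k] (1 : B)) = Coalgebra.counit (R := k) h • (1 : B)
  /-- `1_H ◁ b = ε_B(b)1_H` -/
  one_actR : ∀ b : B, actR ((1 : H) ⊗ₜ[k] b) = Coalgebra.counit (R := k) b • (1 : H)
  /-- `h ▷ (bc) = Σ (h₍₁₎ ▷ b₍₁₎)((h₍₂₎ ◁ b₍₂₎) ▷ c)` -/
  actL_mul : actL ∘ₗ LinearMap.lTensor H (LinearMap.mul' k B)
    = LinearMap.mul' k B
      ∘ₗ TensorProduct.map actL
          (actL ∘ₗ LinearMap.rTensor B actR ∘ₗ (TensorProduct.assoc k H B B).symm.toLinearMap)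
      ∘ₗ (TensorProduct.tensorTensorTensorComm k H H B (B ⊗[k] B)).toLinearMap
      ∘ₗ LinearMap.lTensor (H ⊗[k] H) (TensorProduct.assoc k B B B).toLinearMap
      ∘ₗ LinearMap.rTensor ((B ⊗[k] B) ⊗[k] B) (Coalgebra.comul (R := k))
      ∘ₗ LinearMap.lTensor H (LinearMap.rTensor B (Coalgebra.comul (R := k)))
  /-- `(hg) ◁ b = Σ (h ◁ (g₍₁₎ ▷ b₍₁₎))(g₍₂₎ ◁ b₍₂₎)` -/
  mul_actR : actR ∘ₗ LinearMap.rTensor B (LinearMap.mul' k H)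
    = LinearMap.mul' k H
      ∘ₗ TensorProduct.map (actR ∘ₗ LinearMap.lTensor H actL) actR
      ∘ₗ (TensorProduct.assoc k H (H ⊗[k] B) (H ⊗[k] B)).symm.toLinearMap
      ∘ₗ LinearMap.lTensor H (TensorProduct.tensorTensorTensorComm k H H B B).toLinearMap
      ∘ₗ (TensorProduct.assoc k H (H ⊗[k] H) (B ⊗[k] B)).toLinearMap
      ∘ₗ LinearMap.rTensor (B ⊗[k] B) (LinearMap.lTensor H (Coalgebra.comul (R := k)))
      ∘ₗ LinearMap.lTensor (H ⊗[k] H) (Coalgebra.comul (R := k))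
  /-- `Σ (h₍₁₎ ◁ b₍₁₎) ⊗ (h₍₂₎ ▷ b₍₂₎) = Σ (h₍₂₎ ◁ b₍₂₎) ⊗ (h₍₁₎ ▷ b₍₁₎)` -/
  compat : TensorProduct.map actR actL
      ∘ₗ (TensorProduct.tensorTensorTensorComm k H H B B).toLinearMap
      ∘ₗ TensorProduct.map (Coalgebra.comul (R := k)) (Coalgebra.comul (R := k))
    = TensorProduct.map actR actL
      ∘ₗ (TensorProduct.tensorTensorTensorComm k H H B B).toLinearMap
      ∘ₗ TensorProduct.map
          ((TensorProduct.comm k H H).toLinearMap ∘ₗ Coalgebra.comul (R := k))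
          ((TensorProduct.comm k B B).toLinearMap ∘ₗ Coalgebra.comul (R := k))

end MatchedPair

/-- The map `R : H ⊗ B → B ⊗ H`, `R(h ⊗ b) = Σ (h₍₁₎ ▷ b₍₁₎) ⊗ (h₍₂₎ ◁ b₍₂₎)` associated to
a matched pair of Hopf algebras. -/
noncomputable def matchedPairR (k B H : Type) [Field k] [Ring B] [HopfAlgebra k B]
    [Ring H] [HopfAlgebra k H]
    (actL : H ⊗[k] B →ₗ[k] B) (actR : H ⊗[k] B →ₗ[k] H) :
    H ⊗[k] B →ₗ[k] B ⊗[k] H :=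
  TensorProduct.map actL actR
  ∘ₗ (TensorProduct.tensorTensorTensorComm k H H B B).toLinearMap
  ∘ₗ TensorProduct.map (Coalgebra.comul (R := k)) (Coalgebra.comul (R := k))


/-- Auxiliary map for the first quasitriangular identity. -/
noncomputable def Phi1 (k B H : Type) [Field k] [Ring B] [HopfAlgebra k B]
    [Ring H] [HopfAlgebra k H]
    (aL : H ⊗[k] B →ₗ[k] B) (aR : H ⊗[k] B →ₗ[k] H) :
    H ⊗[k] ((H ⊗[k] (H ⊗[k] H)) ⊗[k] (B ⊗[k] (B ⊗[k] B))) →ₗ[k] B ⊗[k] H :=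
  LinearMap.lTensor B (LinearMap.mul' k H)
  ∘ₗ (TensorProduct.assoc k B H H).toLinearMap
  ∘ₗ LinearMap.rTensor H (TensorProduct.map aL aR
       ∘ₗ (TensorProduct.tensorTensorTensorComm k H H B B).toLinearMap
       ∘ₗ LinearMap.rTensor (B ⊗[k] B) (Coalgebra.comul (R := k)))
  ∘ₗ (TensorProduct.assoc k H (B ⊗[k] B) H).symm.toLinearMap
  ∘ₗ LinearMap.lTensor H ((TensorProduct.assoc k B B H).symm.toLinearMap)
  ∘ₗ LinearMap.lTensor H (LinearMap.lTensor B (TensorProduct.map aL aR))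
  ∘ₗ LinearMap.lTensor H (TensorProduct.map aL
       (TensorProduct.tensorTensorTensorComm k H H B B).toLinearMap)
  ∘ₗ LinearMap.lTensor H
       ((TensorProduct.tensorTensorTensorComm k H (H ⊗[k] H) B (B ⊗[k] B)).toLinearMap)

/-- Auxiliary map for the second quasitriangular identity. -/
noncomputable def Phi2 (k B H : Type) [Field k] [Ring B] [HopfAlgebra k B]
    [Ring H] [HopfAlgebra k H]
    (aL : H ⊗[k] B →ₗ[k] B) (aR : H ⊗[k] B →ₗ[k] H) :
    ((H ⊗[k] (H ⊗[k] H)) ⊗[k] (B ⊗[k] (B ⊗[k] B))) ⊗[k] B →ₗ[k] B ⊗[k] H :=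
  LinearMap.rTensor H (LinearMap.mul' k B)
  ∘ₗ (TensorProduct.assoc k B B H).symm.toLinearMap
  ∘ₗ LinearMap.lTensor B (TensorProduct.map aL aR
       ∘ₗ (TensorProduct.tensorTensorTensorComm k H H B B).toLinearMap
       ∘ₗ LinearMap.lTensor (H ⊗[k] H) (Coalgebra.comul (R := k)))
  ∘ₗ (TensorProduct.assoc k B (H ⊗[k] H) B).toLinearMap
  ∘ₗ LinearMap.rTensor B (LinearMap.lTensor B (TensorProduct.map aR aR))
  ∘ₗ LinearMap.rTensor B (TensorProduct.map aL
       (TensorProduct.tensorTensorTensorComm k H H B B).toLinearMap)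
  ∘ₗ LinearMap.rTensor B
       ((TensorProduct.tensorTensorTensorComm k H (H ⊗[k] H) B (B ⊗[k] B)).toLinearMap)

section AuxReorder
variable {M : Type*} [AddCommMonoid M]

lemma sum_rotate₂ {α δ : Type*} {ε : δ → Type*} (sp : Finset α) (ss : Finset δ)
    (Ft : ∀ s, Finset (ε s)) (f : α → ∀ s, ε s → M) :
    ∑ p ∈ sp, ∑ s ∈ ss, ∑ t ∈ Ft s, f p s t
      = ∑ s ∈ ss, ∑ t ∈ Ft s, ∑ p ∈ sp, f p s t := by
  rw [Finset.sum_comm]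
  exact Finset.sum_congr rfl fun s _ => Finset.sum_comm

lemma sum_rotate₄ {α β γ : Type*} {δ : β → Type*} {ε : γ → Type*}
    (sp : Finset α) (si : Finset β) (sj : Finset γ)
    (Fs : ∀ i, Finset (δ i)) (Ft : ∀ j, Finset (ε j))
    (f : α → ∀ i, ∀ j, δ i → ε j → M) :
    ∑ p ∈ sp, ∑ i ∈ si, ∑ j ∈ sj, ∑ s ∈ Fs i, ∑ t ∈ Ft j, f p i j s t
      = ∑ i ∈ si, ∑ j ∈ sj, ∑ s ∈ Fs i, ∑ t ∈ Ft j, ∑ p ∈ sp, f p i j s t := by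
  rw [Finset.sum_comm]
  refine Finset.sum_congr rfl fun i _ => ?_
  rw [Finset.sum_comm]
  refine Finset.sum_congr rfl fun j _ => ?_
  exact sum_rotate₂ _ _ _ _

end AuxReorder

section AuxMP
open Coalgebra
variable {k B H : Type} [Field k] [Ring B] [HopfAlgebra k B] [Ring H] [HopfAlgebra k H]
variable {actL : H ⊗[k] B →ₗ[k] B} {actR : H ⊗[k] B →ₗ[k] H}

lemma ttt_comul_apply {M N : Type} [AddCommMonoid M] [Module k M] [AddCommMonoid N] [Module k N]
    (f : H ⊗[k] B →ₗ[k] M) (g : H ⊗[k] B →ₗ[k] N)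
    {x : H} {y : B} {ι κ : Type*} {sx : Finset ι} {sy : Finset κ}
    {x₁ x₂ : ι → H} {y₁ y₂ : κ → B}
    (hx : ∑ i ∈ sx, x₁ i ⊗ₜ[k] x₂ i = Coalgebra.comul (R := k) x)
    (hy : ∑ j ∈ sy, y₁ j ⊗ₜ[k] y₂ j = Coalgebra.comul (R := k) y) :
    (TensorProduct.map f g
      ∘ₗ (TensorProduct.tensorTensorTensorComm k H H B B).toLinearMap
      ∘ₗ TensorProduct.map (Coalgebra.comul (R := k)) (Coalgebra.comul (R := k)))
      (x ⊗ₜ[k] y)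
      = ∑ i ∈ sx, ∑ j ∈ sy, f (x₁ i ⊗ₜ[k] y₁ j) ⊗ₜ[k] g (x₂ i ⊗ₜ[k] y₂ j) := by
  rw [LinearMap.comp_apply, LinearMap.comp_apply, map_tmul, ← hx, ← hy, sum_tmul]
  rw [map_sum, map_sum]
  simp [tmul_sum, map_sum]

lemma matchedPairR_apply
    {x : H} {y : B} {ι κ : Type*} {sx : Finset ι} {sy : Finset κ}
    {x₁ x₂ : ι → H} {y₁ y₂ : κ → B}
    (hx : ∑ i ∈ sx, x₁ i ⊗ₜ[k] x₂ i = Coalgebra.comul (R := k) x)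
    (hy : ∑ j ∈ sy, y₁ j ⊗ₜ[k] y₂ j = Coalgebra.comul (R := k) y) :
    matchedPairR k B H actL actR (x ⊗ₜ[k] y)
      = ∑ i ∈ sx, ∑ j ∈ sy, actL (x₁ i ⊗ₜ[k] y₁ j) ⊗ₜ[k] actR (x₂ i ⊗ₜ[k] y₂ j) := by
  rw [matchedPairR]; exact ttt_comul_apply actL actR hx hy

lemma sum_counit_smul_right {A : Type} [AddCommGroup A] [Module k A] [Coalgebra k A]
    {a : A} (r : Coalgebra.Repr k a (A × A)) :
    ∑ i ∈ r.index, Coalgebra.counit (R := k) (r.left i) • r.right i = a := by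
  have h := Coalgebra.sum_counit_tmul_eq (R := k) r
  have h2 := congrArg (TensorProduct.lid k A) h
  rw [map_sum] at h2
  simp only [TensorProduct.lid_tmul, one_smul] at h2
  exact h2

lemma sum_counit_smul_left {A : Type} [AddCommGroup A] [Module k A] [Coalgebra k A]
    {a : A} (r : Coalgebra.Repr k a (A × A)) :
    ∑ i ∈ r.index, Coalgebra.counit (R := k) (r.right i) • r.left i = a := by
  have h := Coalgebra.sum_tmul_counit_eq (R := k) r
  have h2 := congrArg (TensorProduct.rid k A) h
  rw [map_sum] at h2
  simp only [TensorProduct.rid_tmul, one_smul] at h2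
  exact h2

set_option synthInstance.maxHeartbeats 1000000 in
lemma Phi1_tmul {g : H} (rg : Coalgebra.Repr k g (H × H)) (x1 x2 x3 : H) (y1 y2 y3 : B) :
    Phi1 k B H actL actR (g ⊗ₜ[k] ((x1 ⊗ₜ[k] (x2 ⊗ₜ[k] x3)) ⊗ₜ[k] (y1 ⊗ₜ[k] (y2 ⊗ₜ[k] y3))))
      = ∑ p ∈ rg.index,
          actL (rg.left p ⊗ₜ[k] actL (x1 ⊗ₜ[k] y1)) ⊗ₜ[k]
            (actR (rg.right p ⊗ₜ[k] actL (x2 ⊗ₜ[k] y2)) * actR (x3 ⊗ₜ[k] y3)) := by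
  simp only [Phi1, LinearMap.comp_apply, LinearMap.lTensor_tmul, LinearEquiv.coe_coe,
    tensorTensorTensorComm_tmul, map_tmul, TensorProduct.assoc_symm_tmul,
    LinearMap.rTensor_tmul]
  rw [← rg.eq, sum_tmul]
  simp [map_sum, tmul_sum, sum_tmul]

lemma Phi1_sum {g : H} (rg : Coalgebra.Repr k g (H × H))
    {ι ι' : Type*} {κ : ι → Type*} {κ' : ι' → Type*}
    (sh : Finset ι) (Fs : ∀ i, Finset (κ i)) (sb : Finset ι') (Ft : ∀ j, Finset (κ' j))
    (X1 X2 X3 : ∀ i, κ i → H) (Y1 Y2 Y3 : ∀ j, κ' j → B) :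
    Phi1 k B H actL actR (g ⊗ₜ[k]
      ((∑ i ∈ sh, ∑ s ∈ Fs i, X1 i s ⊗ₜ[k] (X2 i s ⊗ₜ[k] X3 i s)) ⊗ₜ[k]
       (∑ j ∈ sb, ∑ t ∈ Ft j, Y1 j t ⊗ₜ[k] (Y2 j t ⊗ₜ[k] Y3 j t))))
      = ∑ i ∈ sh, ∑ j ∈ sb, ∑ s ∈ Fs i, ∑ t ∈ Ft j, ∑ p ∈ rg.index,
          actL (rg.left p ⊗ₜ[k] actL (X1 i s ⊗ₜ[k] Y1 j t)) ⊗ₜ[k]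
            (actR (rg.right p ⊗ₜ[k] actL (X2 i s ⊗ₜ[k] Y2 j t)) * actR (X3 i s ⊗ₜ[k] Y3 j t)) := by
  simp only [sum_tmul]
  simp only [tmul_sum]
  simp only [map_sum]
  simp only [Phi1_tmul rg]
  exact Finset.sum_congr rfl fun i _ => Finset.sum_comm

lemma matchedPairR_apply₂x
    {x : H} {y : B} {ι : Type*} {κ : ι → Type*} {ι' : Type*}
    {sx : Finset ι} {Fx : ∀ p, Finset (κ p)} {sy : Finset ι'}
    {x₁ x₂ : ∀ p, κ p → H} {y₁ y₂ : ι' → B}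
    (hx : ∑ p ∈ sx, ∑ i ∈ Fx p, x₁ p i ⊗ₜ[k] x₂ p i = Coalgebra.comul (R := k) x)
    (hy : ∑ j ∈ sy, y₁ j ⊗ₜ[k] y₂ j = Coalgebra.comul (R := k) y) :
    matchedPairR k B H actL actR (x ⊗ₜ[k] y)
      = ∑ p ∈ sx, ∑ i ∈ Fx p, ∑ j ∈ sy,
          actL (x₁ p i ⊗ₜ[k] y₁ j) ⊗ₜ[k] actR (x₂ p i ⊗ₜ[k] y₂ j) := by
  rw [matchedPairR, LinearMap.comp_apply, LinearMap.comp_apply, map_tmul, ← hx, ← hy, sum_tmul]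
  rw [map_sum, map_sum]
  simp [sum_tmul, tmul_sum, map_sum]
  exact Finset.sum_congr rfl fun p _ => Finset.sum_comm

lemma matchedPairR_apply₂y
    {x : H} {y : B} {ι : Type*} {ι' : Type*} {κ : ι' → Type*}
    {sx : Finset ι} {sy : Finset ι'} {Fy : ∀ j, Finset (κ j)}
    {x₁ x₂ : ι → H} {y₁ y₂ : ∀ j, κ j → B}
    (hx : ∑ p ∈ sx, x₁ p ⊗ₜ[k] x₂ p = Coalgebra.comul (R := k) x)
    (hy : ∑ j ∈ sy, ∑ t ∈ Fy j, y₁ j t ⊗ₜ[k] y₂ j t = Coalgebra.comul (R := k) y) :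
    matchedPairR k B H actL actR (x ⊗ₜ[k] y)
      = ∑ p ∈ sx, ∑ j ∈ sy, ∑ t ∈ Fy j,
          actL (x₁ p ⊗ₜ[k] y₁ j t) ⊗ₜ[k] actR (x₂ p ⊗ₜ[k] y₂ j t) := by
  rw [matchedPairR, LinearMap.comp_apply, LinearMap.comp_apply, map_tmul, ← hx, ← hy, sum_tmul]
  rw [map_sum, map_sum]
  simp [sum_tmul, tmul_sum, map_sum]

lemma comul_mul_sum {A : Type} [Ring A] [Bialgebra k A]
    {x x' : A} {ι κ : Type*} {sx : Finset ι} {sy : Finset κ}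
    {x₁ x₂ : ι → A} {y₁ y₂ : κ → A}
    (hx : ∑ i ∈ sx, x₁ i ⊗ₜ[k] x₂ i = Coalgebra.comul (R := k) x)
    (hy : ∑ j ∈ sy, y₁ j ⊗ₜ[k] y₂ j = Coalgebra.comul (R := k) x') :
    Coalgebra.comul (R := k) (x * x')
      = ∑ i ∈ sx, ∑ j ∈ sy, (x₁ i * y₁ j) ⊗ₜ[k] (x₂ i * y₂ j) := by
  rw [Bialgebra.comul_mul, ← hx, ← hy, Finset.sum_mul_sum]
  simp [Algebra.TensorProduct.tmul_mul_tmul]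

set_option synthInstance.maxHeartbeats 1000000 in
lemma Phi2_tmul {c : B} (rc : Coalgebra.Repr k c (B × B)) (x1 x2 x3 : H) (y1 y2 y3 : B) :
    Phi2 k B H actL actR (((x1 ⊗ₜ[k] (x2 ⊗ₜ[k] x3)) ⊗ₜ[k] (y1 ⊗ₜ[k] (y2 ⊗ₜ[k] y3))) ⊗ₜ[k] c)
      = ∑ u ∈ rc.index,
          (actL (x1 ⊗ₜ[k] y1) * actL (actR (x2 ⊗ₜ[k] y2) ⊗ₜ[k] rc.left u)) ⊗ₜ[k]
            actR (actR (x3 ⊗ₜ[k] y3) ⊗ₜ[k] rc.right u) := by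
  simp only [Phi2, LinearMap.comp_apply, LinearMap.rTensor_tmul, LinearEquiv.coe_coe,
    tensorTensorTensorComm_tmul, map_tmul, TensorProduct.assoc_tmul,
    LinearMap.lTensor_tmul]
  rw [← rc.eq, tmul_sum]
  simp [map_sum, tmul_sum, sum_tmul]

lemma Phi2_sum {c : B} (rc : Coalgebra.Repr k c (B × B))
    {ι ι' : Type*} {κ : ι → Type*} {κ' : ι' → Type*}
    (sh : Finset ι) (Fs : ∀ i, Finset (κ i)) (sb : Finset ι') (Ft : ∀ j, Finset (κ' j))
    (X1 X2 X3 : ∀ i, κ i → H) (Y1 Y2 Y3 : ∀ j, κ' j → B) :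
    Phi2 k B H actL actR (
      ((∑ i ∈ sh, ∑ s ∈ Fs i, X1 i s ⊗ₜ[k] (X2 i s ⊗ₜ[k] X3 i s)) ⊗ₜ[k]
       (∑ j ∈ sb, ∑ t ∈ Ft j, Y1 j t ⊗ₜ[k] (Y2 j t ⊗ₜ[k] Y3 j t))) ⊗ₜ[k] c)
      = ∑ i ∈ sh, ∑ j ∈ sb, ∑ s ∈ Fs i, ∑ t ∈ Ft j, ∑ u ∈ rc.index,
          (actL (X1 i s ⊗ₜ[k] Y1 j t) * actL (actR (X2 i s ⊗ₜ[k] Y2 j t) ⊗ₜ[k] rc.left u)) ⊗ₜ[k]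
            actR (actR (X3 i s ⊗ₜ[k] Y3 j t) ⊗ₜ[k] rc.right u) := by
  simp only [sum_tmul, tmul_sum, map_sum]
  simp only [Phi2_tmul rc]
  exact (Finset.sum_congr rfl fun j _ => Finset.sum_comm).trans
    (Finset.sum_comm.trans
      (Finset.sum_congr rfl fun i _ => Finset.sum_congr rfl fun j _ => Finset.sum_comm))

variable (hmp : MatchedPair k B H actL actR)
include hmp

lemma comul_actL_apply
    {x : H} {y : B} {ι κ : Type*} {sx : Finset ι} {sy : Finset κ}
    {x₁ x₂ : ι → H} {y₁ y₂ : κ → B}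
    (hx : ∑ i ∈ sx, x₁ i ⊗ₜ[k] x₂ i = Coalgebra.comul (R := k) x)
    (hy : ∑ j ∈ sy, y₁ j ⊗ₜ[k] y₂ j = Coalgebra.comul (R := k) y) :
    Coalgebra.comul (R := k) (actL (x ⊗ₜ[k] y))
      = ∑ i ∈ sx, ∑ j ∈ sy, actL (x₁ i ⊗ₜ[k] y₁ j) ⊗ₜ[k] actL (x₂ i ⊗ₜ[k] y₂ j) := by
  have h1 := LinearMap.congr_fun hmp.comul_actL (x ⊗ₜ[k] y)
  rw [LinearMap.comp_apply] at h1
  rw [h1, ttt_comul_apply actL actL hx hy]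

lemma comul_actR_apply
    {x : H} {y : B} {ι κ : Type*} {sx : Finset ι} {sy : Finset κ}
    {x₁ x₂ : ι → H} {y₁ y₂ : κ → B}
    (hx : ∑ i ∈ sx, x₁ i ⊗ₜ[k] x₂ i = Coalgebra.comul (R := k) x)
    (hy : ∑ j ∈ sy, y₁ j ⊗ₜ[k] y₂ j = Coalgebra.comul (R := k) y) :
    Coalgebra.comul (R := k) (actR (x ⊗ₜ[k] y))
      = ∑ i ∈ sx, ∑ j ∈ sy, actR (x₁ i ⊗ₜ[k] y₁ j) ⊗ₜ[k] actR (x₂ i ⊗ₜ[k] y₂ j) := by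
  have h1 := LinearMap.congr_fun hmp.comul_actR (x ⊗ₜ[k] y)
  rw [LinearMap.comp_apply] at h1
  rw [h1, ttt_comul_apply actR actR hx hy]

lemma actL_mul_apply
    {x : H} {y : B} (c : B) {ι κ : Type*} {sx : Finset ι} {sy : Finset κ}
    {x₁ x₂ : ι → H} {y₁ y₂ : κ → B}
    (hx : ∑ i ∈ sx, x₁ i ⊗ₜ[k] x₂ i = Coalgebra.comul (R := k) x)
    (hy : ∑ j ∈ sy, y₁ j ⊗ₜ[k] y₂ j = Coalgebra.comul (R := k) y) :
    actL (x ⊗ₜ[k] (y * c))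
      = ∑ i ∈ sx, ∑ j ∈ sy,
          actL (x₁ i ⊗ₜ[k] y₁ j) * actL (actR (x₂ i ⊗ₜ[k] y₂ j) ⊗ₜ[k] c) := by
  have h1 := LinearMap.congr_fun hmp.actL_mul (x ⊗ₜ[k] (y ⊗ₜ[k] c))
  simp only [LinearMap.comp_apply, LinearMap.lTensor_tmul, LinearMap.mul'_apply,
    LinearMap.rTensor_tmul] at h1
  rw [h1, ← hx, ← hy]
  simp [sum_tmul, tmul_sum, map_sum, TensorProduct.assoc_tmul, LinearMap.mul'_apply]
  rw [Finset.sum_comm]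

lemma mul_actR_apply
    (x : H) {x' : H} {y : B} {ι κ : Type*} {sx : Finset ι} {sy : Finset κ}
    {x₁ x₂ : ι → H} {y₁ y₂ : κ → B}
    (hx : ∑ i ∈ sx, x₁ i ⊗ₜ[k] x₂ i = Coalgebra.comul (R := k) x')
    (hy : ∑ j ∈ sy, y₁ j ⊗ₜ[k] y₂ j = Coalgebra.comul (R := k) y) :
    actR ((x * x') ⊗ₜ[k] y)
      = ∑ i ∈ sx, ∑ j ∈ sy,
          actR (x ⊗ₜ[k] actL (x₁ i ⊗ₜ[k] y₁ j)) * actR (x₂ i ⊗ₜ[k] y₂ j) := by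
  have h1 := LinearMap.congr_fun hmp.mul_actR ((x ⊗ₜ[k] x') ⊗ₜ[k] y)
  simp only [LinearMap.comp_apply, LinearMap.rTensor_tmul, LinearMap.mul'_apply,
    LinearMap.lTensor_tmul] at h1
  rw [h1, ← hx, ← hy]
  simp [sum_tmul, tmul_sum, map_sum, TensorProduct.assoc_tmul, LinearMap.mul'_apply]
  rw [Finset.sum_comm]

lemma matchedPairR_one_left (b : B) :
    matchedPairR k B H actL actR ((1 : H) ⊗ₜ[k] b) = b ⊗ₜ[k] (1 : H) := by
  have h1 : ∑ i ∈ ({0} : Finset ℕ), (fun _ => (1:H)) i ⊗ₜ[k] (fun _ => (1:H)) i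
      = Coalgebra.comul (R := k) (1 : H) := by
    simp [Algebra.TensorProduct.one_def]
  rw [matchedPairR_apply h1 (Coalgebra.Repr.arbitrary k b).eq]
  simp only [Finset.sum_singleton, hmp.one_actL, hmp.one_actR]
  calc ∑ j ∈ (Coalgebra.Repr.arbitrary k b).index,
        (Coalgebra.Repr.arbitrary k b).left j ⊗ₜ[k]
          (Coalgebra.counit (R := k) ((Coalgebra.Repr.arbitrary k b).right j) • (1:H))
      = (∑ j ∈ (Coalgebra.Repr.arbitrary k b).index,
          Coalgebra.counit (R := k) ((Coalgebra.Repr.arbitrary k b).right j) •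
            (Coalgebra.Repr.arbitrary k b).left j) ⊗ₜ[k] (1:H) := by
        rw [sum_tmul]
        exact Finset.sum_congr rfl fun j _ => by rw [tmul_smul, smul_tmul']
    _ = b ⊗ₜ[k] (1:H) := by rw [sum_counit_smul_left]

lemma matchedPairR_one_right (h : H) :
    matchedPairR k B H actL actR (h ⊗ₜ[k] (1 : B)) = (1 : B) ⊗ₜ[k] h := by
  have h1 : ∑ i ∈ ({0} : Finset ℕ), (fun _ => (1:B)) i ⊗ₜ[k] (fun _ => (1:B)) i
      = Coalgebra.comul (R := k) (1 : B) := by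
    simp [Algebra.TensorProduct.one_def]
  rw [matchedPairR_apply (Coalgebra.Repr.arbitrary k h).eq h1]
  simp only [Finset.sum_singleton, hmp.actL_one, hmp.actR_unit]
  calc ∑ i ∈ (Coalgebra.Repr.arbitrary k h).index,
        (Coalgebra.counit (R := k) ((Coalgebra.Repr.arbitrary k h).left i) • (1:B)) ⊗ₜ[k]
          (Coalgebra.Repr.arbitrary k h).right i
      = (1:B) ⊗ₜ[k] (∑ i ∈ (Coalgebra.Repr.arbitrary k h).index,
          Coalgebra.counit (R := k) ((Coalgebra.Repr.arbitrary k h).left i) •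
            (Coalgebra.Repr.arbitrary k h).right i) := by
        rw [tmul_sum]
        exact Finset.sum_congr rfl fun i _ => by rw [← smul_tmul', ← tmul_smul]
    _ = (1:B) ⊗ₜ[k] h := by rw [sum_counit_smul_right]

end AuxMP

set_option synthInstance.maxHeartbeats 1000000 in
set_option maxHeartbeats 2000000 in
/-- For a matched pair `(B, H)` of Hopf algebras, the map
`R(h ⊗ b) = Σ (h₍₁₎ ▷ b₍₁₎) ⊗ (h₍₂₎ ◁ b₍₂₎) : H ⊗ B → B ⊗ H` is quasitriangular and
normal. -/
theorem matchedPairR_quasitriangular_normal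
    (k B H : Type) [Field k] [Ring B] [HopfAlgebra k B] [Ring H] [HopfAlgebra k H]
    (actL : H ⊗[k] B →ₗ[k] B) (actR : H ⊗[k] B →ₗ[k] H)
    (hmp : MatchedPair k B H actL actR) :
    Quasitriangular k B H (matchedPairR k B H actL actR)
    ∧ RNormal k B H (matchedPairR k B H actL actR) := by
  classical
  unfold Quasitriangular RNormal
  refine ⟨⟨?_, ?_⟩, fun b => matchedPairR_one_left hmp b, fun h => matchedPairR_one_right hmp h⟩
  · -- first quasitriangular identity
    refine TensorProduct.ext (TensorProduct.ext (LinearMap.ext fun g => LinearMap.ext fun h =>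
      LinearMap.ext fun b => ?_))
    simp only [LinearMap.compr₂_apply, LinearMap.compr₂ₛₗ_apply, TensorProduct.mk_apply, LinearMap.comp_apply,
      LinearEquiv.coe_coe]
    have rg := Coalgebra.Repr.arbitrary k g
    have rh := Coalgebra.Repr.arbitrary k h
    have rb := Coalgebra.Repr.arbitrary k b
    have r1h : ∀ i, Coalgebra.Repr k (rh.left i) (H × H) := fun i => Coalgebra.Repr.arbitrary k _
    have r2h : ∀ i, Coalgebra.Repr k (rh.right i) (H × H) := fun i => Coalgebra.Repr.arbitrary k _
    have r1b : ∀ j, Coalgebra.Repr k (rb.left j) (B × B) := fun j => Coalgebra.Repr.arbitrary k _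
    have r2b : ∀ j, Coalgebra.Repr k (rb.right j) (B × B) := fun j => Coalgebra.Repr.arbitrary k _
    have hgh : ∑ p ∈ rg.index, ∑ i ∈ rh.index,
        (rg.left p * rh.left i) ⊗ₜ[k] (rg.right p * rh.right i)
        = Coalgebra.comul (R := k) (g * h) := (comul_mul_sum rg.eq rh.eq).symm
    -- LHS computation
    have eL : matchedPairR k B H actL actR ((g * h) ⊗ₜ[k] b)
        = ∑ p ∈ rg.index, ∑ i ∈ rh.index, ∑ j ∈ rb.index,
            ∑ s ∈ (r2h i).index, ∑ t ∈ (r2b j).index,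
            actL (rg.left p ⊗ₜ[k] actL (rh.left i ⊗ₜ[k] rb.left j)) ⊗ₜ[k]
              (actR (rg.right p ⊗ₜ[k] actL ((r2h i).left s ⊗ₜ[k] (r2b j).left t)) *
                actR ((r2h i).right s ⊗ₜ[k] (r2b j).right t)) := by
      rw [matchedPairR_apply₂x hgh rb.eq]
      refine Finset.sum_congr rfl fun p _ => Finset.sum_congr rfl fun i _ =>
        Finset.sum_congr rfl fun j _ => ?_
      rw [hmp.mul_actL, mul_actR_apply hmp _ (r2h i).eq (r2b j).eq]
      simp only [tmul_sum]
    -- RHS computation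
    have hyv : ∀ i j, ∑ s ∈ (r1h i).index, ∑ t ∈ (r1b j).index,
        actL ((r1h i).left s ⊗ₜ[k] (r1b j).left t) ⊗ₜ[k]
          actL ((r1h i).right s ⊗ₜ[k] (r1b j).right t)
        = Coalgebra.comul (R := k) (actL (rh.left i ⊗ₜ[k] rb.left j)) :=
      fun i j => (comul_actL_apply hmp (r1h i).eq (r1b j).eq).symm
    have eR : (LinearMap.lTensor B (LinearMap.mul' k H))
          ((TensorProduct.assoc k B H H)
            ((LinearMap.rTensor H (matchedPairR k B H actL actR))
              ((TensorProduct.assoc k H B H).symm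
                ((LinearMap.lTensor H (matchedPairR k B H actL actR))
                  ((TensorProduct.assoc k H H B) ((g ⊗ₜ[k] h) ⊗ₜ[k] b))))))
        = ∑ i ∈ rh.index, ∑ j ∈ rb.index,
            ∑ s ∈ (r1h i).index, ∑ t ∈ (r1b j).index, ∑ p ∈ rg.index,
            actL (rg.left p ⊗ₜ[k] actL ((r1h i).left s ⊗ₜ[k] (r1b j).left t)) ⊗ₜ[k]
              (actR (rg.right p ⊗ₜ[k] actL ((r1h i).right s ⊗ₜ[k] (r1b j).right t)) *
                actR (rh.right i ⊗ₜ[k] rb.right j)) := by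
      rw [TensorProduct.assoc_tmul, LinearMap.lTensor_tmul,
        matchedPairR_apply rh.eq rb.eq]
      simp only [tmul_sum, map_sum, TensorProduct.assoc_symm_tmul, LinearMap.rTensor_tmul]
      refine Finset.sum_congr rfl fun i _ => Finset.sum_congr rfl fun j _ => ?_
      rw [matchedPairR_apply₂y rg.eq (hyv i j)]
      simp only [sum_tmul, map_sum, TensorProduct.assoc_tmul, LinearMap.lTensor_tmul,
        LinearMap.mul'_apply]
      exact sum_rotate₂ _ _ _ _
    -- the two canonical forms via Phi1
    have eP2 := Phi1_sum (actL := actL) (actR := actR) rg rh.index (fun i => (r2h i).index)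
      rb.index (fun j => (r2b j).index)
      (fun i _ => rh.left i) (fun i s => (r2h i).left s) (fun i s => (r2h i).right s)
      (fun j _ => rb.left j) (fun j t => (r2b j).left t) (fun j t => (r2b j).right t)
    have eP1 := Phi1_sum (actL := actL) (actR := actR) rg rh.index (fun i => (r1h i).index)
      rb.index (fun j => (r1b j).index)
      (fun i s => (r1h i).left s) (fun i s => (r1h i).right s) (fun i _ => rh.right i)
      (fun j t => (r1b j).left t) (fun j t => (r1b j).right t) (fun j _ => rb.right j)
    have ewh : (∑ i ∈ rh.index, ∑ s ∈ (r1h i).index,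
          (r1h i).left s ⊗ₜ[k] ((r1h i).right s ⊗ₜ[k] rh.right i))
        = ∑ i ∈ rh.index, ∑ s ∈ (r2h i).index,
          rh.left i ⊗ₜ[k] ((r2h i).left s ⊗ₜ[k] (r2h i).right s) :=
      Coalgebra.sum_tmul_tmul_eq rh r1h r2h
    have ewb : (∑ j ∈ rb.index, ∑ t ∈ (r1b j).index,
          (r1b j).left t ⊗ₜ[k] ((r1b j).right t ⊗ₜ[k] rb.right j))
        = ∑ j ∈ rb.index, ∑ t ∈ (r2b j).index,
          rb.left j ⊗ₜ[k] ((r2b j).left t ⊗ₜ[k] (r2b j).right t) :=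
      Coalgebra.sum_tmul_tmul_eq rb r1b r2b
    rw [LinearMap.rTensor_tmul, LinearMap.mul'_apply, eL, eR,
      sum_rotate₄ rg.index rh.index rb.index (fun i => (r2h i).index) (fun j => (r2b j).index),
      ← eP2, ← ewh, ← ewb, eP1]
  · -- second quasitriangular identity
    refine TensorProduct.ext (LinearMap.ext fun h => TensorProduct.ext
      (LinearMap.ext fun b => LinearMap.ext fun c => ?_))
    simp only [LinearMap.compr₂_apply, LinearMap.compr₂ₛₗ_apply, TensorProduct.mk_apply, LinearMap.comp_apply,
      LinearEquiv.coe_coe]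
    have rh := Coalgebra.Repr.arbitrary k h
    have rb := Coalgebra.Repr.arbitrary k b
    have rc := Coalgebra.Repr.arbitrary k c
    have r1h : ∀ i, Coalgebra.Repr k (rh.left i) (H × H) := fun i => Coalgebra.Repr.arbitrary k _
    have r2h : ∀ i, Coalgebra.Repr k (rh.right i) (H × H) := fun i => Coalgebra.Repr.arbitrary k _
    have r1b : ∀ j, Coalgebra.Repr k (rb.left j) (B × B) := fun j => Coalgebra.Repr.arbitrary k _
    have r2b : ∀ j, Coalgebra.Repr k (rb.right j) (B × B) := fun j => Coalgebra.Repr.arbitrary k _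
    have hbc : ∑ j ∈ rb.index, ∑ u ∈ rc.index,
        (rb.left j * rc.left u) ⊗ₜ[k] (rb.right j * rc.right u)
        = Coalgebra.comul (R := k) (b * c) := (comul_mul_sum rb.eq rc.eq).symm
    have eL : matchedPairR k B H actL actR (h ⊗ₜ[k] (b * c))
        = ∑ i ∈ rh.index, ∑ j ∈ rb.index, ∑ u ∈ rc.index,
            ∑ s ∈ (r1h i).index, ∑ t ∈ (r1b j).index,
            (actL ((r1h i).left s ⊗ₜ[k] (r1b j).left t) *
              actL (actR ((r1h i).right s ⊗ₜ[k] (r1b j).right t) ⊗ₜ[k] rc.left u)) ⊗ₜ[k]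
              actR (actR (rh.right i ⊗ₜ[k] rb.right j) ⊗ₜ[k] rc.right u) := by
      rw [matchedPairR_apply₂y rh.eq hbc]
      refine Finset.sum_congr rfl fun i _ => Finset.sum_congr rfl fun j _ =>
        Finset.sum_congr rfl fun u _ => ?_
      rw [hmp.actR_mul', actL_mul_apply hmp _ (r1h i).eq (r1b j).eq]
      simp only [sum_tmul]
    have hxv : ∀ i j, ∑ s ∈ (r2h i).index, ∑ t ∈ (r2b j).index,
        actR ((r2h i).left s ⊗ₜ[k] (r2b j).left t) ⊗ₜ[k]
          actR ((r2h i).right s ⊗ₜ[k] (r2b j).right t)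
        = Coalgebra.comul (R := k) (actR (rh.right i ⊗ₜ[k] rb.right j)) :=
      fun i j => (comul_actR_apply hmp (r2h i).eq (r2b j).eq).symm
    have eR : (LinearMap.rTensor H (LinearMap.mul' k B))
          ((TensorProduct.assoc k B B H).symm
            ((LinearMap.lTensor B (matchedPairR k B H actL actR))
              ((TensorProduct.assoc k B H B)
                ((LinearMap.rTensor B (matchedPairR k B H actL actR))
                  ((TensorProduct.assoc k H B B).symm (h ⊗ₜ[k] (b ⊗ₜ[k] c)))))))
        = ∑ i ∈ rh.index, ∑ j ∈ rb.index,
            ∑ s ∈ (r2h i).index, ∑ t ∈ (r2b j).index, ∑ u ∈ rc.index,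
            (actL (rh.left i ⊗ₜ[k] rb.left j) *
              actL (actR ((r2h i).left s ⊗ₜ[k] (r2b j).left t) ⊗ₜ[k] rc.left u)) ⊗ₜ[k]
              actR (actR ((r2h i).right s ⊗ₜ[k] (r2b j).right t) ⊗ₜ[k] rc.right u) := by
      rw [TensorProduct.assoc_symm_tmul, LinearMap.rTensor_tmul,
        matchedPairR_apply rh.eq rb.eq]
      simp only [sum_tmul, map_sum, TensorProduct.assoc_tmul, LinearMap.lTensor_tmul]
      refine Finset.sum_congr rfl fun i _ => Finset.sum_congr rfl fun j _ => ?_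
      rw [matchedPairR_apply₂x (hxv i j) rc.eq]
      simp only [tmul_sum, map_sum, TensorProduct.assoc_symm_tmul, LinearMap.rTensor_tmul,
        LinearMap.mul'_apply]
    have eP1 := Phi2_sum (actL := actL) (actR := actR) rc rh.index (fun i => (r1h i).index)
      rb.index (fun j => (r1b j).index)
      (fun i s => (r1h i).left s) (fun i s => (r1h i).right s) (fun i _ => rh.right i)
      (fun j t => (r1b j).left t) (fun j t => (r1b j).right t) (fun j _ => rb.right j)
    have eP2 := Phi2_sum (actL := actL) (actR := actR) rc rh.index (fun i => (r2h i).index)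
      rb.index (fun j => (r2b j).index)
      (fun i _ => rh.left i) (fun i s => (r2h i).left s) (fun i s => (r2h i).right s)
      (fun j _ => rb.left j) (fun j t => (r2b j).left t) (fun j t => (r2b j).right t)
    have ewh : (∑ i ∈ rh.index, ∑ s ∈ (r1h i).index,
          (r1h i).left s ⊗ₜ[k] ((r1h i).right s ⊗ₜ[k] rh.right i))
        = ∑ i ∈ rh.index, ∑ s ∈ (r2h i).index,
          rh.left i ⊗ₜ[k] ((r2h i).left s ⊗ₜ[k] (r2h i).right s) :=
      Coalgebra.sum_tmul_tmul_eq rh r1h r2h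
    have ewb : (∑ j ∈ rb.index, ∑ t ∈ (r1b j).index,
          (r1b j).left t ⊗ₜ[k] ((r1b j).right t ⊗ₜ[k] rb.right j))
        = ∑ j ∈ rb.index, ∑ t ∈ (r2b j).index,
          rb.left j ⊗ₜ[k] ((r2b j).left t ⊗ₜ[k] (r2b j).right t) :=
      Coalgebra.sum_tmul_tmul_eq rb r1b r2b
    have reord : (∑ i ∈ rh.index, ∑ j ∈ rb.index, ∑ u ∈ rc.index,
          ∑ s ∈ (r1h i).index, ∑ t ∈ (r1b j).index,
          (actL ((r1h i).left s ⊗ₜ[k] (r1b j).left t) *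
            actL (actR ((r1h i).right s ⊗ₜ[k] (r1b j).right t) ⊗ₜ[k] rc.left u)) ⊗ₜ[k]
            actR (actR (rh.right i ⊗ₜ[k] rb.right j) ⊗ₜ[k] rc.right u))
        = ∑ i ∈ rh.index, ∑ j ∈ rb.index,
            ∑ s ∈ (r1h i).index, ∑ t ∈ (r1b j).index, ∑ u ∈ rc.index,
            (actL ((r1h i).left s ⊗ₜ[k] (r1b j).left t) *
              actL (actR ((r1h i).right s ⊗ₜ[k] (r1b j).right t) ⊗ₜ[k] rc.left u)) ⊗ₜ[k]
              actR (actR (rh.right i ⊗ₜ[k] rb.right j) ⊗ₜ[k] rc.right u) :=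
      Finset.sum_congr rfl fun i _ => Finset.sum_congr rfl fun j _ =>
        sum_rotate₂ _ _ _ _
    rw [LinearMap.lTensor_tmul, LinearMap.mul'_apply, eL, eR, reord, ← eP1, ewh, ewb, eP2]
end
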